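/- Suppose the signed radius of curvature R is strictly increasing on (a,b). Then for all a < s₁ < s₂ < b one has |γ̃(s₂) − γ̃(s₁) − (R(s₂) − R(s₁)) ν(s₁)| ≤ |s₂ − s₁| · |R(s₂) − R(s₁)| / min_{s ∈ [s₁,s₂]} |R(s)|; in particular (γ̃(s₂) − γ̃(s₁)) / (R(s₂) − R(s₁)) = ν(s₁) + O(|s₂ − s₁|) as s₂ → s₁. -/

import Mathlib

open Set Real Topology Filter
open scoped NNReal

noncomputable section

/-- The Euclidean plane. -/
abbrev Plane := EuclideanSpace ℝ (Fin 2)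

/-- Rotation of a plane vector by `+π/2`. -/
def Jrot (v : Plane) : Plane := WithLp.toLp 2 ![-(v 1), v 0]

local notation "⟪" x ", " y "⟫" => @inner ℝ _ _ x y

lemma Jrot_Jrot (v : Plane) : Jrot (Jrot v) = -v := by
  ext i
  fin_cases i <;> simp [Jrot]

/-- `Jrot` as a continuous linear map. -/
def JrotL : Plane →L[ℝ] Plane :=
  LinearMap.toContinuousLinearMap
  { toFun := Jrot
    map_add' := by intro x y; ext i; fin_cases i <;> simp [Jrot] <;> ring
    map_smul' := by intro c x; ext i; fin_cases i <;> simp [Jrot] <;> ring }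

lemma JrotL_apply (v : Plane) : JrotL v = Jrot v := rfl

lemma inner_plane (x y : Plane) : ⟪x, y⟫ = x 0 * y 0 + x 1 * y 1 := by
  simp [PiLp.inner_apply, Fin.sum_univ_two]; ring

lemma decomp (t w : Plane) (ht : ‖t‖ = 1) :
    w = ⟪w, t⟫ • t + ⟪w, Jrot t⟫ • Jrot t := by
  have h : t 0 ^ 2 + t 1 ^ 2 = 1 := by
    have := real_inner_self_eq_norm_sq t
    rw [inner_plane, ht] at this
    nlinarith [this]
  ext i
  fin_cases i
  · show w 0 = _
    simp [inner_plane, Jrot, PiLp.add_apply, PiLp.smul_apply, smul_eq_mul]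
    linear_combination (-(w 0)) * h
  · show w 1 = _
    simp [inner_plane, Jrot, PiLp.add_apply, PiLp.smul_apply, smul_eq_mul]
    linear_combination (-(w 1)) * h

/-- quantitative tangency estimate for the evolute when `R` is
strictly increasing. -/
theorem evolute_difference_estimate
    (a b : ℝ) (hab : a < b) (γ ν ev : ℝ → Plane) (κ R : ℝ → ℝ)
    (hγ : ContDiffOn ℝ 2 γ (Ioo a b))
    (harc : ∀ s ∈ Ioo a b, ‖deriv γ s‖ = 1)
    (hν : ∀ s, ν s = Jrot (deriv γ s))
    (hκdef : ∀ s, κ s = ⟪deriv (deriv γ) s, ν s⟫)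
    (hκ : ∀ s ∈ Ioo a b, κ s ≠ 0)
    (hR : ∀ s, R s = (κ s)⁻¹)
    (hev : ∀ s, ev s = γ s + R s • ν s)
    (hmono : StrictMonoOn R (Ioo a b)) :
    (∀ s₁ ∈ Ioo a b, ∀ s₂ ∈ Ioo a b, s₁ < s₂ →
      ‖ev s₂ - ev s₁ - (R s₂ - R s₁) • ν s₁‖ ≤
        |s₂ - s₁| * |R s₂ - R s₁| / sInf ((fun s => |R s|) '' Icc s₁ s₂)) ∧
    (∀ s₁ ∈ Ioo a b, ∃ C > 0, ∀ᶠ s₂ in 𝓝[≠] s₁, s₂ ∈ Ioo a b →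
      ‖(R s₂ - R s₁)⁻¹ • (ev s₂ - ev s₁) - ν s₁‖ ≤ C * |s₂ - s₁|) := by
  have hopen : IsOpen (Ioo a b) := isOpen_Ioo
  have hd1 : ∀ s ∈ Ioo a b, HasDerivAt γ (deriv γ s) s := fun s hs =>
    ((hγ.contDiffAt (hopen.mem_nhds hs)).differentiableAt (by norm_num)).hasDerivAt
  have hγ' : ContDiffOn ℝ 1 (deriv γ) (Ioo a b) :=
    hγ.deriv_of_isOpen hopen (by norm_num)
  have hd2 : ∀ s ∈ Ioo a b, HasDerivAt (deriv γ) (deriv (deriv γ) s) s := fun s hs =>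
    ((hγ'.contDiffAt (hopen.mem_nhds hs)).differentiableAt one_ne_zero).hasDerivAt
  have hγ'' : ContDiffOn ℝ 0 (deriv (deriv γ)) (Ioo a b) :=
    hγ'.deriv_of_isOpen hopen (by norm_num)
  have hcont2 : ContinuousOn (deriv (deriv γ)) (Ioo a b) := hγ''.continuousOn
  have hcont1 : ContinuousOn (deriv γ) (Ioo a b) := hγ'.continuousOn
  have hνcont : ContinuousOn ν (Ioo a b) := by
    have h := JrotL.continuous.comp_continuousOn hcont1
    exact h.congr fun s _ => by rw [hν s]; rfl
  have hκcont : ContinuousOn κ (Ioo a b) := by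
    have h : ContinuousOn (fun s => (⟪deriv (deriv γ) s, ν s⟫ : ℝ)) (Ioo a b) :=
      hcont2.inner hνcont
    exact h.congr fun s _ => hκdef s
  have hRcont : ContinuousOn R (Ioo a b) :=
    ((hκcont.inv₀ hκ)).congr fun s _ => hR s
  -- γ'' = κ ν
  have hsecond : ∀ s ∈ Ioo a b, deriv (deriv γ) s = κ s • ν s := by
    intro s hs
    have horth : ⟪deriv (deriv γ) s, deriv γ s⟫ = 0 := by
      have hg := HasDerivAt.inner ℝ (hd2 s hs) (hd2 s hs)
      have hconst : (fun t => ⟪deriv γ t, deriv γ t⟫) =ᶠ[𝓝 s] fun _ => (1:ℝ) := by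
        filter_upwards [hopen.mem_nhds hs] with t ht
        rw [real_inner_self_eq_norm_sq, harc t ht]; norm_num
      have h0 : HasDerivAt (fun t => ⟪deriv γ t, deriv γ t⟫) 0 s :=
        (hasDerivAt_const s (1:ℝ)).congr_of_eventuallyEq hconst
      have huniq := hg.unique h0
      have hc : ⟪deriv γ s, deriv (deriv γ) s⟫ = ⟪deriv (deriv γ) s, deriv γ s⟫ :=
        real_inner_comm _ _
      rw [hc] at huniq
      linarith
    have hdec := decomp (deriv γ s) (deriv (deriv γ) s) (harc s hs)
    rw [horth, zero_smul, zero_add, ← hν s, ← hκdef s] at hdec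
    exact hdec
  -- derivative of ν
  have hνd : ∀ s ∈ Ioo a b, HasDerivAt ν (-(κ s) • deriv γ s) s := by
    intro s hs
    have h1 : HasDerivAt (fun t => JrotL (deriv γ t)) (JrotL (deriv (deriv γ) s)) s :=
      JrotL.hasFDerivAt.comp_hasDerivAt s (hd2 s hs)
    have h2 : (fun t => JrotL (deriv γ t)) = ν := by
      funext t; rw [hν t, JrotL_apply]
    rw [h2] at h1
    convert h1 using 1
    rw [hsecond s hs, map_smul, JrotL_apply, hν s, Jrot_Jrot]
    module
  -- key integral identity
  have key : ∀ u ∈ Ioo a b, ∀ v ∈ Ioo a b,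
      ev v - ev u - (R v - R u) • ν u = ∫ s in u..v, (1 - R v * κ s) • deriv γ s := by
    intro u hu v hv
    have hsub : uIcc u v ⊆ Ioo a b := Set.ordConnected_Ioo.uIcc_subset hu hv
    have hF : ∀ s ∈ uIcc u v,
        HasDerivAt (fun t => γ t + R v • ν t) ((1 - R v * κ s) • deriv γ s) s := by
      intro s hs
      have h := (hd1 s (hsub hs)).add ((hνd s (hsub hs)).const_smul (R v))
      refine h.congr_deriv ?_
      module
    have hint : IntervalIntegrable (fun s => (1 - R v * κ s) • deriv γ s)
        MeasureTheory.volume u v :=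
      ((continuousOn_const.sub (continuousOn_const.mul (hκcont.mono hsub))).smul
        (hcont1.mono hsub)).intervalIntegrable
    rw [intervalIntegral.integral_eq_sub_of_hasDerivAt hF hint, hev v, hev u]
    module
  -- pointwise bound helper
  constructor
  · -- Part 1
    intro s₁ hs₁ s₂ hs₂ h12
    have hKsub : Icc s₁ s₂ ⊆ Ioo a b := Icc_subset_Ioo hs₁.1 hs₂.2
    have hKne : (Icc s₁ s₂).Nonempty := nonempty_Icc.2 h12.le
    have hfc : ContinuousOn (fun s => |R s|) (Icc s₁ s₂) := (hRcont.mono hKsub).abs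
    obtain ⟨x, hxK, hxmin⟩ := isCompact_Icc.exists_isMinOn hKne hfc
    set m := sInf ((fun s => |R s|) '' Icc s₁ s₂) with hm
    have hmeq : m = |R x| := by
      apply le_antisymm
      · exact csInf_le (isCompact_Icc.image_of_continuousOn hfc).bddBelow ⟨x, hxK, rfl⟩
      · exact le_csInf (hKne.image _) (by rintro y ⟨z, hz, rfl⟩; exact hxmin hz)
    have hRx : R x ≠ 0 := by rw [hR]; exact inv_ne_zero (hκ x (hKsub hxK))
    have hmpos : 0 < m := hmeq ▸ abs_pos.2 hRx
    have hmle : ∀ s ∈ Icc s₁ s₂, m ≤ |R s| := fun s hs => hmeq ▸ hxmin hs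
    have hΔpos : 0 < R s₂ - R s₁ := sub_pos.2 (hmono hs₁ hs₂ h12)
    rw [key s₁ hs₁ s₂ hs₂]
    have hb : ∀ s ∈ uIoc s₁ s₂, ‖(1 - R s₂ * κ s) • deriv γ s‖ ≤ (R s₂ - R s₁) / m := by
      intro s hs
      rw [uIoc_of_le h12.le] at hs
      have hsK : s ∈ Icc s₁ s₂ := ⟨hs.1.le, hs.2⟩
      have hsI : s ∈ Ioo a b := hKsub hsK
      have hκs := hκ s hsI
      have h1 : (1 - R s₂ * κ s) = (R s - R s₂) * κ s := by
        rw [hR s]; field_simp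
      rw [norm_smul, Real.norm_eq_abs, harc s hsI, mul_one, h1, abs_mul]
      have hRs : |κ s| = |R s|⁻¹ := by rw [hR s, abs_inv, inv_inv]
      rw [hRs]
      have hb1 : |R s - R s₂| ≤ R s₂ - R s₁ := by
        have l1 : R s₁ ≤ R s := hmono.monotoneOn hs₁ hsI hs.1.le
        have l2 : R s ≤ R s₂ := hmono.monotoneOn hsI hs₂ hs.2
        rw [abs_sub_comm, abs_of_nonneg (sub_nonneg.2 l2)]; linarith
      have hb2 : |R s|⁻¹ ≤ m⁻¹ := by
        apply inv_anti₀ hmpos (hmle s hsK)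
      calc |R s - R s₂| * |R s|⁻¹ ≤ (R s₂ - R s₁) * m⁻¹ :=
            mul_le_mul hb1 hb2 (inv_nonneg.2 (abs_nonneg _)) hΔpos.le
        _ = (R s₂ - R s₁) / m := (div_eq_mul_inv _ _).symm
    have hle := intervalIntegral.norm_integral_le_of_norm_le_const hb
    calc ‖∫ s in s₁..s₂, (1 - R s₂ * κ s) • deriv γ s‖
        ≤ (R s₂ - R s₁) / m * |s₂ - s₁| := hle
      _ = |s₂ - s₁| * |R s₂ - R s₁| / m := by rw [abs_of_pos hΔpos]; ring
  · -- Part 2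
    intro s₁ hs₁
    obtain ⟨ha1, hb1⟩ := hs₁
    have hs₁' : s₁ ∈ Ioo a b := ⟨ha1, hb1⟩
    set δ := min (s₁ - a) (b - s₁) / 2 with hδ
    have hminpos : 0 < min (s₁ - a) (b - s₁) := lt_min (by linarith) (by linarith)
    have hδpos : 0 < δ := by rw [hδ]; positivity
    have hδa : δ < s₁ - a := by
      have := min_le_left (s₁ - a) (b - s₁); rw [hδ]; linarith
    have hδb : δ < b - s₁ := by
      have := min_le_right (s₁ - a) (b - s₁); rw [hδ]; linarith
    have hKsub : Icc (s₁ - δ) (s₁ + δ) ⊆ Ioo a b := by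
      intro t ht
      exact ⟨by have := ht.1; linarith, by have := ht.2; linarith⟩
    have hKne : (Icc (s₁ - δ) (s₁ + δ)).Nonempty := nonempty_Icc.2 (by linarith)
    have hfc : ContinuousOn (fun s => |R s|) (Icc (s₁ - δ) (s₁ + δ)) :=
      (hRcont.mono hKsub).abs
    obtain ⟨x, hxK, hxmin⟩ := isCompact_Icc.exists_isMinOn hKne hfc
    have hRx : R x ≠ 0 := by rw [hR]; exact inv_ne_zero (hκ x (hKsub hxK))
    set m := |R x| with hm
    have hmpos : 0 < m := abs_pos.2 hRx
    have hmle : ∀ s ∈ Icc (s₁ - δ) (s₁ + δ), m ≤ |R s| := fun s hs => hxmin hs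
    refine ⟨m⁻¹, inv_pos.2 hmpos, ?_⟩
    have h1 : ∀ᶠ s₂ in 𝓝[≠] s₁, s₂ ∈ Metric.ball s₁ δ :=
      mem_nhdsWithin_of_mem_nhds (Metric.ball_mem_nhds s₁ hδpos)
    have h2 : ∀ᶠ s₂ in 𝓝[≠] s₁, s₂ ≠ s₁ := self_mem_nhdsWithin
    filter_upwards [h1, h2] with s₂ hball hne _hIoo
    have hd : |s₂ - s₁| < δ := by
      have := Metric.mem_ball.1 hball
      rwa [Real.dist_eq] at this
    have habs := abs_lt.1 hd
    have hs₂K : s₂ ∈ Icc (s₁ - δ) (s₁ + δ) := ⟨by linarith [habs.1], by linarith [habs.2]⟩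
    have hs₂I : s₂ ∈ Ioo a b := hKsub hs₂K
    have hs₁K : s₁ ∈ Icc (s₁ - δ) (s₁ + δ) := ⟨by linarith, by linarith⟩
    have hΔ : R s₂ - R s₁ ≠ 0 :=
      sub_ne_zero.2 fun h => hne (hmono.injOn hs₂I hs₁' h)
    have heq : (R s₂ - R s₁)⁻¹ • (ev s₂ - ev s₁) - ν s₁
        = (R s₂ - R s₁)⁻¹ • (ev s₂ - ev s₁ - (R s₂ - R s₁) • ν s₁) := by
      match_scalars <;> field_simp
    rw [heq, norm_smul, Real.norm_eq_abs, abs_inv]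
    have hsub2 : uIcc s₁ s₂ ⊆ Icc (s₁ - δ) (s₁ + δ) :=
      Set.ordConnected_Icc.uIcc_subset hs₁K hs₂K
    have hb : ∀ s ∈ uIoc s₁ s₂,
        ‖(1 - R s₂ * κ s) • deriv γ s‖ ≤ |R s₂ - R s₁| * m⁻¹ := by
      intro s hs
      have hsK : s ∈ Icc (s₁ - δ) (s₁ + δ) := hsub2 (Set.uIoc_subset_uIcc hs)
      have hsI : s ∈ Ioo a b := hKsub hsK
      have hκs := hκ s hsI
      have h1 : (1 - R s₂ * κ s) = (R s - R s₂) * κ s := by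
        rw [hR s]; field_simp
      rw [norm_smul, Real.norm_eq_abs, harc s hsI, mul_one, h1, abs_mul]
      have hRs : |κ s| = |R s|⁻¹ := by rw [hR s, abs_inv, inv_inv]
      rw [hRs]
      have hb1 : |R s - R s₂| ≤ |R s₂ - R s₁| := by
        rcases le_total s₁ s₂ with hle | hle
        · rw [uIoc_of_le hle] at hs
          have l1 : R s₁ ≤ R s := hmono.monotoneOn hs₁' hsI hs.1.le
          have l2 : R s ≤ R s₂ := hmono.monotoneOn hsI hs₂I hs.2
          rw [abs_sub_comm, abs_of_nonneg (sub_nonneg.2 l2)]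
          have : R s₂ - R s ≤ R s₂ - R s₁ := by linarith
          exact this.trans (le_abs_self _)
        · rw [uIoc_of_ge hle] at hs
          have l1 : R s₂ ≤ R s := hmono.monotoneOn hs₂I hsI hs.1.le
          have l2 : R s ≤ R s₁ := hmono.monotoneOn hsI hs₁' hs.2
          rw [abs_of_nonneg (sub_nonneg.2 l1), abs_sub_comm]
          have : R s - R s₂ ≤ R s₁ - R s₂ := by linarith
          exact this.trans (le_abs_self _)
      have hb2 : |R s|⁻¹ ≤ m⁻¹ := inv_anti₀ hmpos (hmle s hsK)
      exact mul_le_mul hb1 hb2 (inv_nonneg.2 (abs_nonneg _)) (abs_nonneg _)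
    have hkey := key s₁ hs₁' s₂ hs₂I
    have hnormint := intervalIntegral.norm_integral_le_of_norm_le_const hb
    rw [← hkey] at hnormint
    have habsne : |R s₂ - R s₁| ≠ 0 := abs_ne_zero.2 hΔ
    calc |R s₂ - R s₁|⁻¹ * ‖ev s₂ - ev s₁ - (R s₂ - R s₁) • ν s₁‖
        ≤ |R s₂ - R s₁|⁻¹ * (|R s₂ - R s₁| * m⁻¹ * |s₂ - s₁|) :=
          mul_le_mul_of_nonneg_left hnormint (inv_nonneg.2 (abs_nonneg _))
      _ = m⁻¹ * |s₂ - s₁| := by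
          rw [show |R s₂ - R s₁| * m⁻¹ * |s₂ - s₁|
                = |R s₂ - R s₁| * (m⁻¹ * |s₂ - s₁|) from by ring,
              ← mul_assoc, inv_mul_cancel₀ habsne, one_mul]
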